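/- Let H be a group and N a subgroup of H. Then the amalgamated free product H *_N (N × ℤ) is isomorphic to the HNN extension of H with stable letter t and associated isomorphism the identity on N, i.e., to ⟨H, t | t⁻¹ n t = n for n ∈ N⟩. -/

import Mathlib

/-- The `Bool`-indexed family `{H, N × ℤ}` used to form the amalgamated free product
`H *_N (N × ℤ)` as a pushout. -/
def amalgFam (H : Type*) [Group H] (N : Subgroup H) : Bool → Type _ :=
  fun b => bif b then H else (↥N × Multiplicative ℤ)

attribute [reducible] amalgFam

instance (H : Type*) [Group H] (N : Subgroup H) : ∀ b, Group (amalgFam H N b)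
  | true => inferInstanceAs (Group H)
  | false => inferInstanceAs (Group (↥N × Multiplicative ℤ))

/-- The inclusions of `N` into `H` and into `N × ℤ` (as `n ↦ (n, 0)`). -/
def amalgMaps (H : Type*) [Group H] (N : Subgroup H) : ∀ b, ↥N →* amalgFam H N b
  | true => N.subtype
  | false => MonoidHom.inl ↥N (Multiplicative ℤ)

section aux

variable {H : Type*} [Group H] (N : Subgroup H)

theorem amalg_base_eq (n : ↥N) :
    Monoid.PushoutI.of (φ := amalgMaps H N) true ((n : H)) =
      Monoid.PushoutI.of (φ := amalgMaps H N) false (n, 1) := by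
  rw [show ((n : H)) = amalgMaps H N true n from rfl,
    show ((n, (1 : Multiplicative ℤ)) : ↥N × Multiplicative ℤ) = amalgMaps H N false n from rfl]
  exact (Monoid.PushoutI.of_apply_eq_base (φ := amalgMaps H N) true n).trans
    (Monoid.PushoutI.of_apply_eq_base (φ := amalgMaps H N) false n).symm

theorem amalg_comm (n : ↥N) :
    Monoid.PushoutI.of (φ := amalgMaps H N) false (1, Multiplicative.ofAdd 1) *
      (Monoid.PushoutI.of (φ := amalgMaps H N) true : H →* _) ((n : H)) =
      (Monoid.PushoutI.of (φ := amalgMaps H N) true : H →* _) ((n : H)) *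
      Monoid.PushoutI.of (φ := amalgMaps H N) false (1, Multiplicative.ofAdd 1) := by
  rw [amalg_base_eq, ← map_mul, ← map_mul, Prod.mk_mul_mk, Prod.mk_mul_mk, one_mul, one_mul,
    mul_one, mul_one]

theorem hnn_comm (n : ↥N) :
    Commute (HNNExtension.of (n : H) : HNNExtension H N N (MulEquiv.refl ↥N)) HNNExtension.t :=
  show _ * _ = _ * _ by simpa using HNNExtension.of_mul_t (φ := MulEquiv.refl ↥N) n

theorem toHNN_comm_aux : ∀ (m : ↥N) (n : Multiplicative ℤ),
    Commute ((HNNExtension.of.comp N.subtype) m)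
      ((zpowersHom (HNNExtension H N N (MulEquiv.refl ↥N)) HNNExtension.t) n) :=
  fun n z => ((hnn_comm N n).zpow_right (Multiplicative.toAdd z))

/-- The family of maps out of the two groups. -/
noncomputable def toHNNfam : ∀ b, amalgFam H N b →* HNNExtension H N N (MulEquiv.refl ↥N)
  | true => HNNExtension.of
  | false => MonoidHom.noncommCoprod
      (HNNExtension.of.comp N.subtype)
      (zpowersHom _ (HNNExtension.t))
      (toHNN_comm_aux N)

/-- The map `PushoutI → HNN`. -/
noncomputable def toHNN : Monoid.PushoutI (amalgMaps H N) →*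
    HNNExtension H N N (MulEquiv.refl ↥N) :=
  Monoid.PushoutI.lift (toHNNfam N) (HNNExtension.of.comp N.subtype)
    (by
      intro b
      cases b
      · rw [show amalgMaps H N false = MonoidHom.inl ↥N (Multiplicative ℤ) from rfl,
          show toHNNfam N false = MonoidHom.noncommCoprod
            (HNNExtension.of.comp N.subtype) (zpowersHom _ (HNNExtension.t))
            (toHNN_comm_aux N) from rfl,
          MonoidHom.noncommCoprod_comp_inl]
      · rfl)

theorem toHNN_of_true (h : H) :
    toHNN N (Monoid.PushoutI.of (φ := amalgMaps H N) true h) = HNNExtension.of h := by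
  rw [toHNN]
  erw [Monoid.PushoutI.lift_of]

theorem toHNN_of_false (p : ↥N × Multiplicative ℤ) :
    toHNN N (Monoid.PushoutI.of (φ := amalgMaps H N) false p) =
      HNNExtension.of ((p.1 : H)) * HNNExtension.t ^ (Multiplicative.toAdd p.2) := by
  rw [toHNN]
  erw [Monoid.PushoutI.lift_of]
  rfl

theorem fromHNN_comm_aux : ∀ a : ↥N,
    Monoid.PushoutI.of (φ := amalgMaps H N) false (1, Multiplicative.ofAdd 1) *
        Monoid.PushoutI.of (φ := amalgMaps H N) true (a : H) =
      Monoid.PushoutI.of (φ := amalgMaps H N) true (((MulEquiv.refl ↥N) a : ↥N) : H) *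
        Monoid.PushoutI.of (φ := amalgMaps H N) false (1, Multiplicative.ofAdd 1) :=
  fun n => amalg_comm N n

/-- The map `HNN → PushoutI`. -/
noncomputable def fromHNN : HNNExtension H N N (MulEquiv.refl ↥N) →*
    Monoid.PushoutI (amalgMaps H N) :=
  HNNExtension.lift (Monoid.PushoutI.of (φ := amalgMaps H N) true)
    (Monoid.PushoutI.of (φ := amalgMaps H N) false (1, Multiplicative.ofAdd 1))
    (fromHNN_comm_aux N)

theorem fromHNN_of (h : H) : fromHNN N (HNNExtension.of h) =
    Monoid.PushoutI.of (φ := amalgMaps H N) true h := by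
  rw [fromHNN, HNNExtension.lift_of]

theorem fromHNN_t : fromHNN N (HNNExtension.t) =
    Monoid.PushoutI.of (φ := amalgMaps H N) false (1, Multiplicative.ofAdd 1) := by
  rw [fromHNN, HNNExtension.lift_t]

end aux

/-- The amalgamated free product `H *_N (N × ℤ)` is isomorphic to the HNN extension
`⟨H, t | t⁻¹ n t = n, n ∈ N⟩` of `H` with associated isomorphism the identity on `N`. -/
theorem stmt_7 {H : Type*} [Group H] (N : Subgroup H) :
    Nonempty (Monoid.PushoutI (amalgMaps H N) ≃*
      HNNExtension H N N (MulEquiv.refl ↥N)) := by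
  refine ⟨MonoidHom.toMulEquiv (toHNN N) (fromHNN N) ?_ ?_⟩
  · apply Monoid.PushoutI.hom_ext
    · intro b
      cases b
      · refine MonoidHom.ext fun p => ?_
        obtain ⟨n, z⟩ := p
        simp only [MonoidHom.comp_apply, MonoidHom.id_apply]
        rw [toHNN_of_false, map_mul, map_zpow, fromHNN_of, fromHNN_t,
          amalg_base_eq, ← map_zpow, ← map_mul]
        congr 1
        refine Prod.ext ?_ ?_
        · simp
        · show ((1 : Multiplicative ℤ) * (Multiplicative.ofAdd 1) ^ Multiplicative.toAdd z) = z
          rw [one_mul, ← ofAdd_zsmul, smul_eq_mul, mul_one, ofAdd_toAdd]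
      · ext h
        simp only [MonoidHom.comp_apply, MonoidHom.id_apply]
        rw [toHNN_of_true, fromHNN_of]
    · ext n
      simp only [MonoidHom.comp_apply, MonoidHom.id_apply]
      rw [← Monoid.PushoutI.of_apply_eq_base (φ := amalgMaps H N) true n]
      rw [show amalgMaps H N true n = ((n : H) : amalgFam H N true) from rfl,
        toHNN_of_true, fromHNN_of]
  · apply HNNExtension.hom_ext
    · ext h
      simp only [MonoidHom.comp_apply, MonoidHom.id_apply]
      rw [fromHNN_of, toHNN_of_true]
    · simp only [MonoidHom.comp_apply, MonoidHom.id_apply]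
      rw [fromHNN_t, toHNN_of_false]
      simp
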